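/- For every integer k ≥ 1 and every element α ∈ E'_{k+1}, the Hankel determinant at the lower left corner of the parallelogram U_{k} satisfies H_{α−f_{2k+3}+1, f_{2k}} = (−1)^k · (H_{α−f_{2k+3}+2, f_{2k}−1} − H_{α−f_{2k+3}+1, f_{2k}−1}). -/

import Mathlib

/-- The substitution τ: 1 → 101, 0 → 1 on the alphabet {0,1}. -/
def tau (b : ℕ) : List ℕ := if b = 1 then [1, 0, 1] else [1]

/-- The iterated word τ^n(1). -/
def tauIter : ℕ → List ℕ
  | 0 => [1]
  | n + 1 => ((tauIter n).map tau).flatten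

/-- `s` is the fixed point of τ beginning with 1: it agrees with every
iterate `τ^n(1)` on its length. -/
def IsFixedSeq (s : ℕ → ℕ) : Prop :=
  ∀ n j, j < (tauIter n).length → s j = (tauIter n).getD j 0

/-- The sequence (f_n): f_0 = 1, f_1 = 2, f_{2n+2} = f_{2n} + f_{2n+1},
f_{2n+3} = f_{2n} + f_{2n+2}. -/
def IsFSeq (f : ℕ → ℕ) : Prop :=
  f 0 = 1 ∧ f 1 = 2 ∧ (∀ n, f (2*n+2) = f (2*n) + f (2*n+1)) ∧
    (∀ n, f (2*n+3) = f (2*n) + f (2*n+2))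

/-- `a` is the f-representation of `n`: digits in {0,1}, finitely supported,
a_i a_{i+1} = 0 for all i, a_i a_{i+2} = 0 for even i, and n = Σ a_i f_i. -/
def IsFRep (f : ℕ → ℕ) (n : ℕ) (a : ℕ → ℕ) : Prop :=
  (∀ i, a i ≤ 1) ∧ (∀ i, a i * a (i+1) = 0) ∧
  (∀ i, Even i → a i * a (i+2) = 0) ∧
  ∃ N, (∀ i, N ≤ i → a i = 0) ∧ n = ∑ i ∈ Finset.range N, a i * f i

/-- The truncated f-representation Φ_k(n) = Σ_{i=0}^{2k+2} a_i(n) f_i. -/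
def Phi (f : ℕ → ℕ) (a : ℕ → ℕ → ℕ) (k n : ℕ) : ℕ :=
  ∑ i ∈ Finset.range (2*k+3), a n i * f i

/-- The Hankel determinant H_{m,n} = det (s_{m+i+j})_{0 ≤ i,j ≤ n-1}. -/
def H (s : ℕ → ℕ) (m n : ℕ) : ℤ :=
  (Matrix.of fun i j : Fin n => (s (m + i.1 + j.1) : ℤ)).det

namespace PellAux

def FF : ℕ → ℕ × ℕ
  | 0 => (1, 2)
  | n + 1 => ((FF n).1 + (FF n).2, 2 * (FF n).1 + (FF n).2)

def F (n : ℕ) : ℕ := if n % 2 = 0 then (FF (n / 2)).1 else (FF (n / 2)).2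

def g : ℕ → ℕ
  | 0 => 1
  | n + 1 => g n + F (2 * n)

lemma F_even (n : ℕ) : F (2 * n) = (FF n).1 := by
  simp [F, Nat.mul_mod_right, Nat.mul_div_cancel_left _ (by norm_num : 0 < 2)]

lemma F_odd (n : ℕ) : F (2 * n + 1) = (FF n).2 := by
  have h1 : (2 * n + 1) % 2 = 1 := by omega
  have h2 : (2 * n + 1) / 2 = n := by omega
  simp [F, h1, h2]

lemma F0 : F 0 = 1 := by simpa [FF] using F_even 0
lemma F1 : F 1 = 2 := by simpa [FF] using F_odd 0
lemma F2 : F 2 = 3 := by simpa [FF] using F_even 1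
lemma F3 : F 3 = 4 := by simpa [FF] using F_odd 1

lemma Frec1 (n : ℕ) : F (2 * n + 2) = F (2 * n) + F (2 * n + 1) := by
  have : 2 * n + 2 = 2 * (n + 1) := by ring
  rw [this, F_even, F_even, F_odd]; rfl

lemma Frec2 (n : ℕ) : F (2 * n + 3) = F (2 * n) + F (2 * n + 2) := by
  have h1 : 2 * n + 3 = 2 * (n + 1) + 1 := by ring
  have h2 : 2 * n + 2 = 2 * (n + 1) := by ring
  rw [h1, h2, F_odd, F_even, F_even]
  show 2 * (FF n).1 + (FF n).2 = (FF n).1 + ((FF n).1 + (FF n).2)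
  ring

lemma gF (n : ℕ) : F (2 * n + 1) = 2 * g n := by
  induction n with
  | zero => simp [F1, g]
  | succ n ih =>
    have h : 2 * (n + 1) + 1 = 2 * n + 3 := by ring
    rw [h, Frec2, Frec1, ih]
    show F (2*n) + (F (2*n) + 2 * g n) = 2 * (g n + F (2*n))
    ring

lemma Fgg (n : ℕ) : F (2 * n + 2) = g (n + 1) + g n := by
  rw [Frec1, gF]; show F (2*n) + 2 * g n = g n + F (2*n) + g n; ring

lemma g_pos (n : ℕ) : 1 ≤ g n := by
  induction n with
  | zero => simp [g]
  | succ n ih => show 1 ≤ g n + F (2*n); omega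

lemma F_even_pos (n : ℕ) : 1 ≤ F (2 * n) := by
  cases n with
  | zero => simp [F0]
  | succ n =>
    have h1 := Fgg n
    have h2 := g_pos n
    have h3 := g_pos (n+1)
    have h : 2 * (n+1) = 2 * n + 2 := by ring
    rw [h]
    omega

lemma g_mono {a b : ℕ} (h : a ≤ b) : g a ≤ g b := by
  induction b with
  | zero => have : a = 0 := by omega
            subst this; exact le_rfl
  | succ b ih =>
    rcases Nat.lt_or_ge a (b+1) with h'|h'
    · have h1 := ih (by omega)
      have h2 := F_even_pos b
      have : g (b+1) = g b + F (2*b) := rfl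
      omega
    · have : a = b + 1 := by omega
      subst this; exact le_rfl

lemma F_even_mono {a b : ℕ} (h : a ≤ b) : F (2 * a) ≤ F (2 * b) := by
  induction b with
  | zero => have : a = 0 := by omega
            subst this; exact le_rfl
  | succ b ih =>
    rcases Nat.lt_or_ge a (b+1) with h'|h'
    · have h1 := ih (by omega)
      have e : 2*(b+1) = 2*b+2 := by ring
      have h2 := Frec1 b
      have h3 := gF b
      have h4 := g_pos b
      rw [e]
      omega
    · have : a = b + 1 := by omega
      subst this; exact le_rfl

lemma Fgg' (n : ℕ) : F (2 * (n+1)) = g (n + 1) + g n := by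
  have h : 2*(n+1) = 2*n+2 := by ring
  rw [h, Fgg]

lemma F_odd_even (n : ℕ) : F (2*n) % 2 = 1 := by
  induction n with
  | zero => simp [F0]
  | succ n ih =>
    have h : 2 * (n+1) = 2*n+2 := by ring
    rw [h, Frec1, gF]
    omega

end PellAux

section
open PellAux

lemma f_eq_F {f : ℕ → ℕ} (hf : IsFSeq f) : ∀ n, f n = F n := by
  obtain ⟨h0, h1, h2, h3⟩ := hf
  have key : ∀ m, f (2*m) = F (2*m) ∧ f (2*m+1) = F (2*m+1) := by
    intro m
    induction m with
    | zero => simpa [F0, F1] using ⟨h0, h1⟩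
    | succ m ih =>
      have e1 : 2 * (m+1) = 2*m+2 := by ring
      have e2 : 2 * (m+1) + 1 = 2*m+3 := by ring
      constructor
      · rw [e1, h2 m, Frec1, ih.1, ih.2]
      · rw [e2, h3 m, Frec2, ih.1]
        have : f (2*m+2) = F (2*m+2) := by rw [h2 m, Frec1, ih.1, ih.2]
        rw [this]
  intro n
  have : n = 2 * (n/2) ∨ n = 2 * (n/2) + 1 := by omega
  rcases this with h|h
  · rw [h]; exact (key _).1
  · rw [h]; exact (key _).2

-- word lemmas
lemma tau_flatten_append (l1 l2 : List ℕ) :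
    ((l1 ++ l2).map tau).flatten = (l1.map tau).flatten ++ (l2.map tau).flatten := by
  rw [List.map_append, List.flatten_append]

lemma Wtriple (n : ℕ) : tauIter (n+2) = tauIter (n+1) ++ tauIter n ++ tauIter (n+1) := by
  induction n with
  | zero => rfl
  | succ n ih =>
    show ((tauIter (n+2)).map tau).flatten =
      tauIter (n+2) ++ tauIter (n+1) ++ tauIter (n+2)
    conv_lhs => rw [ih]
    rw [tau_flatten_append, tau_flatten_append]
    rfl

lemma Wlen : ∀ n, (tauIter n).length = F (2*n) := by
  have key : ∀ n, (tauIter n).length = F (2*n) ∧ (tauIter (n+1)).length = F (2*(n+1)) := by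
    intro n
    induction n with
    | zero =>
      constructor
      · show ([1] : List ℕ).length = F 0; simp [F0]
      · show (tauIter 1).length = F 2
        have : tauIter 1 = [1,0,1] := rfl
        simp [this, F2]
    | succ n ih =>
      refine ⟨ih.2, ?_⟩
      have A : (2:ℕ) * (n+1) = 2*n+2 := by ring
      have B : (2:ℕ) * (n+2) = 2*n+4 := by ring
      rw [Wtriple, List.length_append, List.length_append, ih.1, ih.2, A, B]
      have r1 : F (2*n+4) = F (2*n+2) + F (2*n+3) := by
        have h := Frec1 (n+1)
        have C : 2*(n+1)+2 = 2*n+4 := by ring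
        have D : 2*(n+1)+1 = 2*n+3 := by ring
        rwa [C, D, A] at h
      have r2 := Frec2 n
      omega
  exact fun n => (key n).1

end

section
open PellAux
variable {s : ℕ → ℕ} (hs : IsFixedSeq s)

include hs in
lemma sEval (n x : ℕ) (h : x < F (2*n)) : s x = (tauIter n).getD x 0 := by
  apply hs
  rw [Wlen]; exact h

include hs in
lemma Codd (n x : ℕ) (h1 : F (2*n+2) ≤ x) (h2 : x < F (2*n+3)) :
    s x = s (x - F (2*n+2)) := by
  have e1 : (2:ℕ)*(n+1) = 2*n+2 := by ring
  have e2 : (2:ℕ)*(n+2) = 2*n+4 := by ring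
  have r1 : F (2*n+4) = F (2*n+2) + F (2*n+3) := by
    have h := Frec1 (n+1)
    have C : 2*(n+1)+2 = 2*n+4 := by ring
    have D : 2*(n+1)+1 = 2*n+3 := by ring
    rwa [C, D, e1] at h
  have r2 := Frec2 n
  have hx4 : x < F (2*n+4) := by omega
  have hlen1 : (tauIter (n+1)).length = F (2*n+2) := by rw [Wlen, e1]
  have hlen0 : (tauIter n).length = F (2*n) := Wlen n
  have hs1 : s x = (tauIter (n+2)).getD x 0 := by
    apply sEval hs; rw [e2]; exact hx4
  rw [hs1, Wtriple]
  rw [List.getD_append _ _ _ _ (by rw [List.length_append, hlen1, hlen0]; omega)]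
  rw [List.getD_append_right _ _ _ _ (by rw [hlen1]; omega)]
  rw [hlen1]
  exact (sEval hs n _ (by omega)).symm

include hs in
lemma Ceven (n x : ℕ) (h1 : F (2*n+3) ≤ x) (h2 : x < F (2*n+4)) :
    s x = s (x - F (2*n+3)) := by
  have e1 : (2:ℕ)*(n+1) = 2*n+2 := by ring
  have e2 : (2:ℕ)*(n+2) = 2*n+4 := by ring
  have r1 : F (2*n+4) = F (2*n+2) + F (2*n+3) := by
    have h := Frec1 (n+1)
    have C : 2*(n+1)+2 = 2*n+4 := by ring
    have D : 2*(n+1)+1 = 2*n+3 := by ring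
    rwa [C, D, e1] at h
  have r2 := Frec2 n
  have hlen1 : (tauIter (n+1)).length = F (2*n+2) := by rw [Wlen, e1]
  have hlen0 : (tauIter n).length = F (2*n) := Wlen n
  have hs1 : s x = (tauIter (n+2)).getD x 0 := by
    apply sEval hs; rw [e2]; exact h2
  rw [hs1, Wtriple]
  rw [List.getD_append_right _ _ _ _ (by rw [List.length_append, hlen1, hlen0]; omega)]
  rw [List.length_append, hlen1, hlen0]
  have e3 : x - (F (2*n+2) + F (2*n)) = x - F (2*n+3) := by omega
  rw [e3]
  exact (sEval hs (n+1) _ (by rw [e1]; omega)).symm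

-- base values s 0 .. s 9
include hs in
lemma sval : s 0 = 1 ∧ s 1 = 0 ∧ s 2 = 1 ∧ s 3 = 1 ∧ s 4 = 1 ∧ s 5 = 0 ∧
    s 6 = 1 ∧ s 7 = 1 ∧ s 8 = 0 ∧ s 9 = 1 := by
  have len3 : (tauIter 3).length = 17 := by decide
  have ev : ∀ x, x < 17 → s x = (tauIter 3).getD x 0 := by
    intro x hx; apply hs; rw [len3]; exact hx
  refine ⟨?_, ?_, ?_, ?_, ?_, ?_, ?_, ?_, ?_, ?_⟩ <;>
    · rw [ev _ (by norm_num)]; decide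

end

namespace PellAux

lemma Frec1' (n : ℕ) : F (2*n+4) = F (2*n+2) + F (2*n+3) := by
  have h := Frec1 (n+1)
  rw [show 2*(n+1)+2 = 2*n+4 from by ring, show 2*(n+1)+1 = 2*n+3 from by ring,
    show 2*(n+1) = 2*n+2 from by ring] at h
  exact h

lemma Frec2' (n : ℕ) : F (2*n+5) = F (2*n+2) + F (2*n+4) := by
  have h := Frec2 (n+1)
  rw [show 2*(n+1)+3 = 2*n+5 from by ring, show 2*(n+1)+2 = 2*n+4 from by ring,
    show 2*(n+1) = 2*n+2 from by ring] at h
  exact h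

lemma Frec1'' (n : ℕ) : F (2*n+6) = F (2*n+4) + F (2*n+5) := by
  have h := Frec1' (n+1)
  rw [show 2*(n+1)+4 = 2*n+6 from by ring, show 2*(n+1)+3 = 2*n+5 from by ring,
    show 2*(n+1)+2 = 2*n+4 from by ring] at h
  exact h

lemma Frec2'' (n : ℕ) : F (2*n+7) = F (2*n+4) + F (2*n+6) := by
  have h := Frec2' (n+1)
  rw [show 2*(n+1)+5 = 2*n+7 from by ring, show 2*(n+1)+4 = 2*n+6 from by ring,
    show 2*(n+1)+2 = 2*n+4 from by ring] at h
  exact h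

lemma gF' (n : ℕ) : F (2*n+3) = 2 * g (n+1) := by
  have h := gF (n+1)
  rw [show 2*(n+1)+1 = 2*n+3 from by ring] at h
  exact h

lemma gF'' (n : ℕ) : F (2*n+5) = 2 * g (n+2) := by
  have h := gF' (n+1)
  rw [show 2*(n+1)+3 = 2*n+5 from by ring] at h
  exact h

lemma Fgg2 (n : ℕ) : F (2*n+4) = g (n+2) + g (n+1) := by
  have h := Fgg (n+1)
  rw [show 2*(n+1)+2 = 2*n+4 from by ring] at h
  exact h

lemma gsucc (n : ℕ) : g (n+1) = g n + F (2*n) := rfl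

lemma gsucc2 (n : ℕ) : g (n+2) = g (n+1) + F (2*n+2) := by
  have h : g (n+2) = g (n+1) + F (2*(n+1)) := rfl
  rw [show 2*(n+1) = 2*n+2 from by ring] at h
  exact h

lemma F4 : F 4 = 7 := by have h := Frec1 1; norm_num [F2, F3] at h; omega
lemma F5 : F 5 = 10 := by have h := Frec2 1; norm_num [F2, F4] at h; omega
lemma g0 : g 0 = 1 := rfl
lemma g1 : g 1 = 2 := by have := gsucc 0; simp [F0, g0] at this ⊢; omega

end PellAux

section
open PellAux
variable {s : ℕ → ℕ} (hs : IsFixedSeq s)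

include hs in
lemma L2plus : ∀ j, ∀ x, x + 2 ≤ g j → s (x + F (2*j)) = s x := by
  intro j
  induction j using Nat.strong_induction_on with
  | _ j ih =>
    match j with
    | 0 => intro x hx; have := g0; omega
    | 1 => intro x hx
           have hg := g1
           have hx0 : x = 0 := by omega
           subst hx0
           have h := Codd hs 0 (0 + F 2)
           norm_num at h ⊢
           have hf0 := F0
           have hf2 := F2
           have hf3 := F3
           exact h (by omega)
    | (j2+2) =>
      intro x hx
      have r1 := Frec2 j2
      have r2 := Frec2' j2
      have r3 := Frec1' j2
      have r4 := Frec1'' j2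
      have q1 := gF' j2
      have q0 := gF j2
      have gg := Fgg j2
      have gs2 := gsucc2 j2
      have gs1 := gsucc j2
      have gp0 := g_pos j2
      have gp1 := g_pos (j2+1)
      have fe : F (2*(j2+2)) = F (2*j2+4) := by rw [show 2*(j2+2) = 2*j2+4 from by ring]
      rw [fe]
      rcases Nat.lt_or_ge x (F (2*j2+2)) with c1|hc1
      · have h := Codd hs (j2+1) (x + F (2*j2+4))
        rw [show 2*(j2+1)+2 = 2*j2+4 from by ring, show 2*(j2+1)+3 = 2*j2+5 from by ring] at h
        have h' := h (by omega) (by omega)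
        rw [h']
        congr 1
        omega
      rcases Nat.lt_or_ge x (F (2*j2+3)) with c2|hc2
      · -- x in [F(2j2+2), F(2j2+3))
        have hx1 := Codd hs j2 x (by omega) (by omega)
        have h := Ceven hs (j2+1) (x + F (2*j2+4))
        rw [show 2*(j2+1)+3 = 2*j2+5 from by ring, show 2*(j2+1)+4 = 2*j2+6 from by ring] at h
        have h' := h (by omega) (by omega)
        rw [h', hx1]
        congr 1
        omega
      · -- x ≥ F(2j2+3)
        have hx1 := Ceven hs j2 x (by omega) (by omega)
        set u := x - F (2*j2+3) with hu
        have h := Ceven hs (j2+1) (x + F (2*j2+4))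
        rw [show 2*(j2+1)+3 = 2*j2+5 from by ring, show 2*(j2+1)+4 = 2*j2+6 from by ring] at h
        have h' := h (by omega) (by omega)
        have e2 : x + F (2*j2+4) - F (2*j2+5) = u + F (2*j2) := by omega
        rw [h', e2, ih j2 (by omega) u (by omega), hx1]

include hs in
lemma L1plus : ∀ j x, x + 2 ≤ F (2*j+3) + g j → s (x + F (2*j+3)) = s x := by
  intro j x hx
  have r1 := Frec2 j
  have r2 := Frec2' j
  have r3 := Frec1' j
  have r4 := Frec1 j
  have q0 := gF j
  have gp0 := g_pos j
  have fp := F_even_pos j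
  rcases Nat.lt_or_ge x (F (2*j+2)) with c1|hc1
  · have h := Ceven hs j (x + F (2*j+3)) (by omega) (by omega)
    rw [h]
    congr 1
    omega
  rcases Nat.lt_or_ge x (F (2*j+3)) with c2|hc2
  · have hx1 := Codd hs j x (by omega) (by omega)
    have h := Codd hs (j+1) (x + F (2*j+3))
    rw [show 2*(j+1)+2 = 2*j+4 from by ring, show 2*(j+1)+3 = 2*j+5 from by ring] at h
    have h' := h (by omega) (by omega)
    rw [h', hx1]
    congr 1
    omega
  · set z := x - F (2*j+3) with hz
    have hx1 := Ceven hs j x (by omega) (by omega)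
    have h := Codd hs (j+1) (x + F (2*j+3))
    rw [show 2*(j+1)+2 = 2*j+4 from by ring, show 2*(j+1)+3 = 2*j+5 from by ring] at h
    have h' := h (by omega) (by omega)
    have e2 : x + F (2*j+3) - F (2*j+4) = z + F (2*j) := by omega
    rw [h', e2, L2plus hs j z (by omega), hx1]

include hs in
lemma L3 : ∀ j x, g j + 1 ≤ x → x + 1 ≤ F (2*j+2) → s (x + F (2*j)) = s x := by
  intro j
  induction j using Nat.strong_induction_on with
  | _ j ih =>
    match j with
    | 0 =>
      intro x hx1 hx2
      norm_num at hx2 ⊢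
      have h0 := g0; have h1 := F0; have h2 := F2
      have hx0 : x = 2 := by omega
      subst hx0
      obtain ⟨s0, s1, s2, s3, _⟩ := sval hs
      rw [show 2 + F 0 = 3 from by omega, s3, s2]
    | 1 =>
      intro x hx1 hx2
      norm_num at hx2 ⊢
      have h1 := g1; have h2 := F2; have h4 := F4
      obtain ⟨s0, s1, s2, s3, s4, s5, s6, s7, s8, s9⟩ := sval hs
      rw [h2]
      have hb1 : 3 ≤ x := by omega
      have hb2 : x ≤ 6 := by omega
      interval_cases x
      · rw [show 3+3 = 6 from rfl, s6, s3]
      · rw [show 4+3 = 7 from rfl, s7, s4]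
      · rw [show 5+3 = 8 from rfl, s8, s5]
      · rw [show 6+3 = 9 from rfl, s9, s6]
    | (j2+2) =>
      intro x hx1 hx2
      have r1 := Frec2 j2
      have r2 := Frec2' j2
      have r3 := Frec1' j2
      have r4 := Frec1'' j2
      have r5 := Frec2'' j2
      have r6 := Frec1 j2
      have q1 := gF' j2
      have q0 := gF j2
      have gg := Fgg j2
      have gg2 := Fgg2 j2
      have gs2 := gsucc2 j2
      have gs1 := gsucc j2
      have gp0 := g_pos j2
      have gp1 := g_pos (j2+1)
      have gp2 := g_pos (j2+2)
      have fe : F (2*(j2+2)) = F (2*j2+4) := by rw [show 2*(j2+2) = 2*j2+4 from by ring]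
      have fe2 : F (2*(j2+2)+2) = F (2*j2+6) := by rw [show 2*(j2+2)+2 = 2*j2+6 from by ring]
      rw [fe] at *
      rw [fe2] at hx2
      rcases Nat.lt_or_ge x (F (2*j2+4)) with c1|hc1
      · -- case a
        have hx0 : s x = s (x - F (2*j2+3)) := Ceven hs j2 x (by omega) (by omega)
        set w := x - F (2*j2+3) with hw
        have h := Ceven hs (j2+1) (x + F (2*j2+4))
        rw [show 2*(j2+1)+3 = 2*j2+5 from by ring, show 2*(j2+1)+4 = 2*j2+6 from by ring] at h
        have h' := h (by omega) (by omega)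
        have e2 : x + F (2*j2+4) - F (2*j2+5) = w + F (2*j2) := by omega
        rw [h', e2, ih j2 (by omega) w (by omega) (by omega), hx0]
      rcases Nat.lt_or_ge x (F (2*j2+5)) with c2|hc2
      · -- case b
        have hx0 : s x = s (x - F (2*j2+4)) := by
          have h := Codd hs (j2+1) x
          rw [show 2*(j2+1)+2 = 2*j2+4 from by ring, show 2*(j2+1)+3 = 2*j2+5 from by ring] at h
          exact h (by omega) (by omega)
        set t := x - F (2*j2+4) with ht
        have h := Ceven hs (j2+1) (x + F (2*j2+4))
        rw [show 2*(j2+1)+3 = 2*j2+5 from by ring, show 2*(j2+1)+4 = 2*j2+6 from by ring] at h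
        have h' := h (by omega) (by omega)
        have e2 : x + F (2*j2+4) - F (2*j2+5) = t + F (2*j2+3) := by omega
        rw [h', e2, L1plus hs j2 t (by omega), hx0]
      · -- case c
        have hx0 : s x = s (x - F (2*j2+5)) := by
          have h := Ceven hs (j2+1) x
          rw [show 2*(j2+1)+3 = 2*j2+5 from by ring, show 2*(j2+1)+4 = 2*j2+6 from by ring] at h
          exact h (by omega) (by omega)
        have h := Codd hs (j2+2) (x + F (2*j2+4))
        rw [show 2*(j2+2)+2 = 2*j2+6 from by ring, show 2*(j2+2)+3 = 2*j2+7 from by ring] at h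
        have h' := h (by omega) (by omega)
        have e2 : x + F (2*j2+4) - F (2*j2+6) = x - F (2*j2+5) := by omega
        rw [h', e2, hx0]

end

section
open PellAux

lemma if_flip (a : ℕ) : (if a % 2 = 1 then (1:ℕ) else 0) = (if (a+1) % 2 = 1 then 0 else 1) := by
  rcases Nat.lt_or_ge (a % 2) 1 with h|h
  · have e1 : a % 2 = 0 := by omega
    have e2 : (a+1) % 2 = 1 := by omega
    rw [e1, e2]; norm_num
  · have e1 : a % 2 = 1 := by omega
    have e2 : (a+1) % 2 = 0 := by omega
    rw [e1, e2]; norm_num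

lemma if_flip' (a : ℕ) : (if a % 2 = 1 then (0:ℕ) else 1) = (if (a+1) % 2 = 1 then 1 else 0) := by
  rcases Nat.lt_or_ge (a % 2) 1 with h|h
  · have e1 : a % 2 = 0 := by omega
    have e2 : (a+1) % 2 = 1 := by omega
    rw [e1, e2]; norm_num
  · have e1 : a % 2 = 1 := by omega
    have e2 : (a+1) % 2 = 0 := by omega
    rw [e1, e2]; norm_num

variable {s : ℕ → ℕ} (hs : IsFixedSeq s)

include hs in
lemma Gval : ∀ j, (s (g j) = if j % 2 = 1 then 1 else 0) ∧
    (s (g j - 1) = if j % 2 = 1 then 0 else 1) := by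
  have key : ∀ j, ((s (g j) = if j % 2 = 1 then 1 else 0) ∧
      (s (g j - 1) = if j % 2 = 1 then 0 else 1)) ∧
      ((s (g (j+1)) = if (j+1) % 2 = 1 then 1 else 0) ∧
      (s (g (j+1) - 1) = if (j+1) % 2 = 1 then 0 else 1)) := by
    intro j
    induction j with
    | zero =>
      obtain ⟨s0, s1, s2, _⟩ := sval hs
      have h0 := g0; have h1 := g1
      refine ⟨⟨?_, ?_⟩, ?_, ?_⟩ <;> simp [h0, h1, s0, s1, s2]
    | succ j ih =>
      refine ⟨ih.2, ?_, ?_⟩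
      · have r1 := Frec2 j
        have r2 := Frec1' j
        have gs2 := gsucc2 j
        have gs1 := gsucc j
        have gp0 := g_pos j
        have gp1 := g_pos (j+1)
        have gg := Fgg j
        have h := Ceven hs j (g (j+2)) (by omega) (by omega)
        have e : g (j+2) - F (2*j+3) = g j := by omega
        rw [h, e, ih.1.1]
        have : (j+2) % 2 = j % 2 := by omega
        rw [this]
      · have r1 := Frec2 j
        have r2 := Frec1' j
        have gs2 := gsucc2 j
        have gs1 := gsucc j
        have gp0 := g_pos j
        have gp1 := g_pos (j+1)
        have gg := Fgg j
        have h := Ceven hs j (g (j+2) - 1) (by omega) (by omega)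
        have e : g (j+2) - 1 - F (2*j+3) = g j - 1 := by omega
        rw [h, e, ih.1.2]
        have : (j+2) % 2 = j % 2 := by omega
        rw [this]
  exact fun j => (key j).1

include hs in
lemma WA : ∀ K, s (g (K+1) + F (2*K)) = if (K+1) % 2 = 1 then 1 else 0 := by
  intro K
  match K with
  | 0 =>
    obtain ⟨s0, s1, s2, s3, _⟩ := sval hs
    have h1 := g1; have h0 := F0
    norm_num
    rw [show g 1 + F (2*0) = 3 from by norm_num; omega, s3]
  | (K'+1) =>
    have r1 := Frec2' K'
    have r2 := Fgg2 K'
    have gg := Fgg K'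
    have gs2 := gsucc2 K'
    have gs1 := gsucc K'
    have gp0 := g_pos K'
    have gp1 := g_pos (K'+1)
    have fe : F (2*(K'+1)) = F (2*K'+2) := by rw [show 2*(K'+1) = 2*K'+2 from by ring]
    rw [fe]
    have h := Codd hs (K'+1) (g (K'+2) + F (2*K'+2))
    rw [show 2*(K'+1)+2 = 2*K'+4 from by ring, show 2*(K'+1)+3 = 2*K'+5 from by ring] at h
    have h' := h (by omega) (by omega)
    have e : g (K'+2) + F (2*K'+2) - F (2*K'+4) = g K' := by omega
    rw [h', e, (Gval hs K').1]
    have : K' % 2 = (K'+2) % 2 := by omega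
    rw [this]

include hs in
lemma WB : ∀ K, s (g (K+1) + F (2*K+2)) = if (K+1) % 2 = 1 then 0 else 1 := by
  intro K
  have r1 := Frec2 K
  have r2 := Frec1' K
  have gg := Fgg K
  have gs1 := gsucc K
  have gp0 := g_pos K
  have gp1 := g_pos (K+1)
  have h := Ceven hs K (g (K+1) + F (2*K+2)) (by omega) (by omega)
  have e : g (K+1) + F (2*K+2) - F (2*K+3) = g K := by omega
  rw [h, e, (Gval hs K).1]
  exact if_flip K

include hs in
lemma WC : ∀ K, s (g (K+1) + F (2*K+2) + F (2*K) - 1) = if (K+1) % 2 = 1 then 0 else 1 := by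
  intro K
  have r1 := Frec2 K
  have r2 := Frec1' K
  have gg := Fgg K
  have gs1 := gsucc K
  have gp0 := g_pos K
  have gp1 := g_pos (K+1)
  have h := Ceven hs K (g (K+1) + F (2*K+2) + F (2*K) - 1) (by omega) (by omega)
  have e : g (K+1) + F (2*K+2) + F (2*K) - 1 - F (2*K+3) = g (K+1) - 1 := by omega
  rw [h, e, (Gval hs (K+1)).2]

include hs in
lemma WD : ∀ K, s (g (K+1) + 2*F (2*K+2) - 1) = if (K+1) % 2 = 1 then 1 else 0 := by
  intro K
  have r1 := Frec2 K
  have r2 := Frec1' K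
  have r3 := Frec2' K
  have gg := Fgg K
  have gs1 := gsucc K
  have gp0 := g_pos K
  have gp1 := g_pos (K+1)
  have h := Codd hs (K+1) (g (K+1) + 2*F (2*K+2) - 1)
  rw [show 2*(K+1)+2 = 2*K+4 from by ring, show 2*(K+1)+3 = 2*K+5 from by ring] at h
  have h' := h (by omega) (by omega)
  have e : g (K+1) + 2*F (2*K+2) - 1 - F (2*K+4) = g K - 1 := by omega
  rw [h', e, (Gval hs K).2]
  exact if_flip' K

include hs in
lemma WI : ∀ K x, g (K+1) + F (2*K) + 1 ≤ x → x + 2 ≤ g (K+1) + F (2*K+2) + F (2*K) →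
    s (x + F (2*K+1)) = s x := by
  intro K
  match K with
  | 0 =>
    intro x hx1 hx2
    obtain ⟨s0, s1, s2, s3, s4, s5, s6, s7, s8, s9⟩ := sval hs
    have h1 := g1; have h0 := F0; have h2 := F2; have hf1 := F1
    norm_num at hx1 hx2 ⊢
    have hx : x = 4 := by omega
    subst hx
    rw [hf1, show (4:ℕ)+2 = 6 from rfl, s6, s4]
  | (K'+1) =>
    intro x hx1 hx2
    have r1 := Frec2 K'
    have r2 := Frec2' K'
    have r3 := Frec1' K'
    have r4 := Frec1'' K'
    have r5 := Frec2'' K'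
    have r6 := Frec1 K'
    have q1 := gF' K'
    have q0 := gF K'
    have gg := Fgg K'
    have gg2 := Fgg2 K'
    have gs2 := gsucc2 K'
    have gs1 := gsucc K'
    have gp0 := g_pos K'
    have gp1 := g_pos (K'+1)
    have gp2 := g_pos (K'+2)
    have fe : F (2*(K'+1)) = F (2*K'+2) := by rw [show 2*(K'+1) = 2*K'+2 from by ring]
    have fe1 : F (2*(K'+1)+1) = F (2*K'+3) := by rw [show 2*(K'+1)+1 = 2*K'+3 from by ring]
    have fe2 : F (2*(K'+1)+2) = F (2*K'+4) := by rw [show 2*(K'+1)+2 = 2*K'+4 from by ring]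
    have ee : K'+1+1 = K'+2 := rfl
    rw [ee, fe, fe2] at hx2
    rw [ee, fe] at hx1
    rw [fe1]
    rcases Nat.lt_or_ge x (F (2*K'+5)) with c1|hc1
    · -- P1
      have hx0 : s x = s (x - F (2*K'+4)) := by
        have h := Codd hs (K'+1) x
        rw [show 2*(K'+1)+2 = 2*K'+4 from by ring, show 2*(K'+1)+3 = 2*K'+5 from by ring] at h
        exact h (by omega) (by omega)
      set x' := x - F (2*K'+4) with hx'
      have h := Ceven hs (K'+1) (x + F (2*K'+3))
      rw [show 2*(K'+1)+3 = 2*K'+5 from by ring, show 2*(K'+1)+4 = 2*K'+6 from by ring] at h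
      have h' := h (by omega) (by omega)
      have e2 : x + F (2*K'+3) - F (2*K'+5) = x' + F (2*K') := by omega
      rw [h', e2, L3 hs K' x' (by omega) (by omega), hx0]
    rcases Nat.lt_or_ge (x + F (2*K'+3)) (F (2*K'+6)) with c2|hc2
    · -- P2
      have hx0 : s x = s (x - F (2*K'+5)) := by
        have h := Ceven hs (K'+1) x
        rw [show 2*(K'+1)+3 = 2*K'+5 from by ring, show 2*(K'+1)+4 = 2*K'+6 from by ring] at h
        exact h (by omega) (by omega)
      set u := x - F (2*K'+5) with hu
      have h := Ceven hs (K'+1) (x + F (2*K'+3))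
      rw [show 2*(K'+1)+3 = 2*K'+5 from by ring, show 2*(K'+1)+4 = 2*K'+6 from by ring] at h
      have h' := h (by omega) (by omega)
      have e2 : x + F (2*K'+3) - F (2*K'+5) = u + F (2*K'+3) := by omega
      rw [h', e2, L1plus hs K' u (by omega), hx0]
    · -- P3
      have hx0 : s x = s (x - F (2*K'+5)) := by
        have h := Ceven hs (K'+1) x
        rw [show 2*(K'+1)+3 = 2*K'+5 from by ring, show 2*(K'+1)+4 = 2*K'+6 from by ring] at h
        exact h (by omega) (by omega)
      set u := x - F (2*K'+5) with hu
      have h := Codd hs (K'+2) (x + F (2*K'+3))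
      rw [show 2*(K'+2)+2 = 2*K'+6 from by ring, show 2*(K'+2)+3 = 2*K'+7 from by ring] at h
      have h' := h (by omega) (by omega)
      have e2 : x + F (2*K'+3) - F (2*K'+6) = u - F (2*K'+2) := by omega
      set v := u - F (2*K'+2) with hv
      have hL := L2plus hs (K'+1) v (by omega)
      rw [show 2*(K'+1) = 2*K'+2 from by ring] at hL
      have e3 : v + F (2*K'+2) = u := by omega
      rw [e3] at hL
      rw [h', e2, ← hL, hx0]

end

namespace PellAux

lemma Fsucc_lt : ∀ t, F t < F (t+1) := by
  intro t
  obtain ⟨m, hm | hm⟩ : ∃ m, t = 2*m ∨ t = 2*m+1 := ⟨t/2, by omega⟩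
  · subst hm
    match m with
    | 0 => norm_num [F0, F1]
    | (m+1) =>
      have h1 := Frec2 m
      have h2 := Frec1 m
      have h3 := F_even_pos m
      have e1 : 2*(m+1) = 2*m+2 := by ring
      have e2 : 2*(m+1)+1 = 2*m+3 := by ring
      rw [e1, show 2*m+2+1 = 2*m+3 from by ring]
      omega
  · subst hm
    have h1 := Frec1 m
    have h2 := F_even_pos m
    rw [show 2*m+1+1 = 2*m+2 from by ring]
    omega

end PellAux

section
open PellAux

lemma SumBound (d : ℕ → ℕ) (h1 : ∀ i, d i ≤ 1) (h2 : ∀ i, d i * d (i+1) = 0)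
    (h3 : ∀ i, Even i → d i * d (i+2) = 0) :
    ∀ t, (∑ i ∈ Finset.range t, d i * F i) + 1 ≤ F t := by
  intro t
  induction t using Nat.strong_induction_on with
  | _ t ih =>
    match t with
    | 0 => simp [F0]
    | (t0+1) =>
      rw [Finset.sum_range_succ]
      rcases Nat.eq_zero_or_pos (d t0) with hz|hp
      · rw [hz]
        have := ih t0 (by omega)
        have := Fsucc_lt t0
        omega
      · have hd1 : d t0 = 1 := by have := h1 t0; omega
        obtain ⟨m, hm | hm⟩ : ∃ m, t0 = 2*m ∨ t0 = 2*m+1 := ⟨t0/2, by omega⟩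
        · subst hm
          match m with
          | 0 =>
            norm_num [F0, F1]
            have hd0 := h1 0
            omega
          | (m+1) =>
            have e1 : 2*(m+1) = 2*m+2 := by ring
            have hz1 : d (2*m+1) = 0 := by
              have := h2 (2*m+1)
              rw [show 2*m+1+1 = 2*(m+1) from by ring, e1] at this
              rw [e1] at hd1
              simp [hd1] at this
              exact this
            have hz0 : d (2*m) = 0 := by
              have := h3 (2*m) ⟨m, by ring⟩
              rw [show 2*m+2 = 2*(m+1) from by ring, e1] at this
              rw [e1] at hd1
              simp [hd1] at this
              exact this
            have hs1 : (∑ i ∈ Finset.range (2*m+2), d i * F i)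
                = ∑ i ∈ Finset.range (2*m), d i * F i := by
              rw [Finset.sum_range_succ, Finset.sum_range_succ, hz0, hz1]
              simp
            rw [e1] at hd1 ⊢
            rw [hs1, hd1, show 2*m+2+1 = 2*m+3 from by ring]
            have hb := ih (2*m) (by omega)
            have hr1 := Frec2 m
            have hr2 := Frec1 m
            omega
        · subst hm
          have hz0 : d (2*m) = 0 := by
            have := h2 (2*m)
            simp [hd1] at this
            exact this
          have hs1 : (∑ i ∈ Finset.range (2*m+1), d i * F i)
              = ∑ i ∈ Finset.range (2*m), d i * F i := by
            rw [Finset.sum_range_succ, hz0]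
            simp
          rw [hs1, hd1, show 2*m+1+1 = 2*m+2 from by ring]
          have hb := ih (2*m) (by omega)
          have hr1 := Frec1 m
          have hr2 := Frec2 m
          omega

end


open PellAux in
theorem lower_left_corner_U (f : ℕ → ℕ) (hf : IsFSeq f) (s : ℕ → ℕ) (hs : IsFixedSeq s) (a : ℕ → ℕ → ℕ) (ha : ∀ n, IsFRep f n (a n)) :
    ∀ k α : ℕ, 1 ≤ k →
      Phi f a (k+1) α = f (2*k+5) / 2 →
      H s (α + 1 - f (2*k+3)) (f (2*k)) =
        (-1 : ℤ)^k * (H s (α + 2 - f (2*k+3)) (f (2*k) - 1) -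
          H s (α + 1 - f (2*k+3)) (f (2*k) - 1)) := by
  intro k α hk hPhi
  obtain ⟨K, rfl⟩ : ∃ K, k = K + 1 := ⟨k - 1, by omega⟩
  have hfF := f_eq_F hf
  obtain ⟨hd1, hd2, hd3, N₀, hN₀, hsum⟩ := ha α
  set d : ℕ → ℕ := a α with hd
  set M₀ := max N₀ (2*K+7) with hM₀
  have hsumF : α = ∑ i ∈ Finset.range M₀, d i * F i := by
    have e1 : ∑ i ∈ Finset.range N₀, d i * f i = ∑ i ∈ Finset.range N₀, d i * F i :=
      Finset.sum_congr rfl (fun i _ => by rw [hfF i])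
    have e2 : ∑ i ∈ Finset.range N₀, d i * F i = ∑ i ∈ Finset.range M₀, d i * F i := by
      apply Finset.sum_subset
      · exact Finset.range_subset_range.2 (le_max_left _ _)
      · intro i _ hni
        have hi2 : N₀ ≤ i := by
          simp only [Finset.mem_range] at hni; omega
        rw [hN₀ i hi2, zero_mul]
    rw [hsum, e1, e2]
  have hPhiVal : (∑ i ∈ Finset.range (2*K+7), d i * F i) = g (K+3) := by
    have e1 : Phi f a (K+1+1) α = ∑ i ∈ Finset.range (2*K+7), d i * F i := by
      show (∑ i ∈ Finset.range (2*(K+1+1)+3), a α i * f i) = _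
      rw [show 2*(K+1+1)+3 = 2*K+7 from by ring]
      exact Finset.sum_congr rfl (fun i _ => by rw [hfF i])
    have e2 : f (2*(K+1)+5) = 2 * g (K+3) := by
      rw [hfF, show 2*(K+1)+5 = 2*(K+2)+3 from by ring]
      exact gF' (K+2)
    rw [← e1, hPhi, e2]
    omega
  set β := ∑ i ∈ Finset.Ico (2*K+7) M₀, d i * F i with hβ
  have hαβ : α = g (K+3) + β := by
    rw [hsumF, ← Finset.sum_range_add_sum_Ico _ (le_max_right N₀ (2*K+7)), hPhiVal]
  -- arithmetic bundle
  have hgs3 : g (K+3) = g (K+2) + F (2*K+4) := by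
    have h := gsucc (K+2); rwa [show 2*(K+2) = 2*K+4 from by ring] at h
  have hgs2 : g (K+2) = g (K+1) + F (2*K+2) := gsucc2 K
  have hgs1 : g (K+1) = g K + F (2*K) := gsucc K
  have hfgg2 : F (2*K+4) = g (K+2) + g (K+1) := Fgg2 K
  have hfgg : F (2*K+2) = g (K+1) + g K := Fgg K
  have hq2 : F (2*K+5) = 2 * g (K+2) := gF'' K
  have hq1 : F (2*K+3) = 2 * g (K+1) := gF' K
  have hq0 : F (2*K+1) = 2 * g K := gF K
  have hr1 : F (2*K+2) = F (2*K) + F (2*K+1) := Frec1 K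
  have hr2 : F (2*K+3) = F (2*K) + F (2*K+2) := Frec2 K
  have hr3 : F (2*K+4) = F (2*K+2) + F (2*K+3) := Frec1' K
  have hr4 : F (2*K+5) = F (2*K+2) + F (2*K+4) := Frec2' K
  have hgp0 : 1 ≤ g K := g_pos K
  have hgp1 : 1 ≤ g (K+1) := g_pos (K+1)
  have hgp2 : 1 ≤ g (K+2) := g_pos (K+2)
  have hFp : 1 ≤ F (2*K) := F_even_pos K
  -- peeling
  have peel : ∀ M x, x + 1 ≤ g (K+1) + 2 * F (2*K+2) →
      s (x + ∑ i ∈ Finset.Ico (2*K+7) M, d i * F i) = s x := by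
    intro M
    induction M with
    | zero =>
      intro x hx
      rw [Finset.Ico_eq_empty (by omega), Finset.sum_empty, Nat.add_zero]
    | succ M ihM =>
      intro x hx
      rcases Nat.lt_or_ge M (2*K+7) with hM|hM
      · rw [Finset.Ico_eq_empty (by omega), Finset.sum_empty, Nat.add_zero]
      · rw [Finset.sum_Ico_succ_top hM]
        rcases Nat.eq_zero_or_pos (d M) with hz|hpos
        · rw [hz, zero_mul, add_zero]; exact ihM x hx
        · have hdM : d M = 1 := by have := hd1 M; omega
          obtain ⟨j, hj | hj⟩ : ∃ j, M = 2*j+3 ∨ M = 2*j+4 := ⟨(M-3)/2, by omega⟩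
          · subst hj
            have hjK : K + 2 ≤ j := by omega
            have hz2 : d (2*j+2) = 0 := by
              have h := hd2 (2*j+2)
              rw [show 2*j+2+1 = 2*j+3 from by ring] at h
              simp [hdM] at h; exact h
            have hb2 : (∑ i ∈ Finset.range (2*j+3), d i * F i)
                = ∑ i ∈ Finset.range (2*j+2), d i * F i := by
              rw [Finset.sum_range_succ, hz2, zero_mul, add_zero]
            have hb3 : (∑ i ∈ Finset.range (2*j+2), d i * F i) + 1 ≤ F (2*j+2) :=
              SumBound d hd1 hd2 hd3 _
            have hsub : Finset.Ico (2*K+7) (2*j+3) ⊆ Finset.range (2*j+3) := by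
              intro i hi; simp only [Finset.mem_Ico] at hi
              simp only [Finset.mem_range]; omega
            have hγr : (∑ i ∈ Finset.Ico (2*K+7) (2*j+3), d i * F i)
                ≤ ∑ i ∈ Finset.range (2*j+3), d i * F i := by
              apply Finset.sum_le_sum_of_subset hsub
            have hmono1 : F (2*K+4) ≤ F (2*j) := by
              have h := F_even_mono (show K+2 ≤ j from hjK)
              rwa [show 2*(K+2) = 2*K+4 from by ring] at h
            have hmono2 : g (K+2) ≤ g j := g_mono hjK
            have hrj1 : F (2*j+3) = F (2*j) + F (2*j+2) := Frec2 j
            have hL := L1plus hs j (x + (∑ i ∈ Finset.Ico (2*K+7) (2*j+3), d i * F i))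
              (by omega)
            rw [hdM, one_mul, ← add_assoc, hL]
            exact ihM x hx
          · subst hj
            have hjK : K + 2 ≤ j := by omega
            have hz2 : d (2*j+3) = 0 := by
              have h := hd2 (2*j+3)
              rw [show 2*j+3+1 = 2*j+4 from by ring] at h
              simp [hdM] at h; exact h
            have hz3 : d (2*j+2) = 0 := by
              have h := hd3 (2*j+2) ⟨j+1, by ring⟩
              rw [show 2*j+2+2 = 2*j+4 from by ring] at h
              simp [hdM] at h; exact h
            have hb2 : (∑ i ∈ Finset.range (2*j+4), d i * F i)
                = ∑ i ∈ Finset.range (2*j+2), d i * F i := by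
              rw [Finset.sum_range_succ, Finset.sum_range_succ, hz2, hz3]; simp
            have hb3 : (∑ i ∈ Finset.range (2*j+2), d i * F i) + 1 ≤ F (2*j+2) :=
              SumBound d hd1 hd2 hd3 _
            have hsub : Finset.Ico (2*K+7) (2*j+4) ⊆ Finset.range (2*j+4) := by
              intro i hi; simp only [Finset.mem_Ico] at hi
              simp only [Finset.mem_range]; omega
            have hγr : (∑ i ∈ Finset.Ico (2*K+7) (2*j+4), d i * F i)
                ≤ ∑ i ∈ Finset.range (2*j+4), d i * F i := by
              apply Finset.sum_le_sum_of_subset hsub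
            have hmono1 : F (2*K+2) ≤ F (2*K+4) := by omega
            have hmono2 : g (K+3) ≤ g (j+1) := g_mono (by omega)
            have hgj2 : g (j+2) = g (j+1) + F (2*j+2) := gsucc2 j
            have hL := L2plus hs (j+2) (x + (∑ i ∈ Finset.Ico (2*K+7) (2*j+4), d i * F i))
              (by omega)
            rw [show 2*(j+2) = 2*j+4 from by ring] at hL
            rw [hdM, one_mul, ← add_assoc, hL]
            exact ihM x hx
  -- window facts with β
  have hRA : s (g (K+1) + β + F (2*K)) = if (K+1) % 2 = 1 then 1 else 0 := by
    rw [show g (K+1) + β + F (2*K) = (g (K+1) + F (2*K)) + β from by ring,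
      peel M₀ _ (by omega)]
    exact WA hs K
  have hRB : s (g (K+1) + β + F (2*K+2)) = if (K+1) % 2 = 1 then 0 else 1 := by
    rw [show g (K+1) + β + F (2*K+2) = (g (K+1) + F (2*K+2)) + β from by ring,
      peel M₀ _ (by omega)]
    exact WB hs K
  have hRC : s (g (K+1) + β + F (2*K+2) + F (2*K) - 1) = if (K+1) % 2 = 1 then 0 else 1 := by
    rw [show g (K+1) + β + F (2*K+2) + F (2*K) - 1
        = (g (K+1) + F (2*K+2) + F (2*K) - 1) + β from by omega,
      peel M₀ _ (by omega)]
    exact WC hs K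
  have hRD : s (g (K+1) + β + 2*F (2*K+2) - 1) = if (K+1) % 2 = 1 then 1 else 0 := by
    rw [show g (K+1) + β + 2*F (2*K+2) - 1
        = (g (K+1) + 2*F (2*K+2) - 1) + β from by omega,
      peel M₀ _ (by omega)]
    exact WD hs K
  have hRI : ∀ i : ℕ, 1 ≤ i → i + 2 ≤ F (2*K+2) →
      s (g (K+1) + β + i + F (2*K) + F (2*K+1)) = s (g (K+1) + β + i + F (2*K)) := by
    intro i h1i h2i
    rw [show g (K+1) + β + i + F (2*K) + F (2*K+1)
        = (g (K+1) + i + F (2*K) + F (2*K+1)) + β from by ring,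
      peel M₀ _ (by omega),
      show g (K+1) + i + F (2*K) + F (2*K+1) = (g (K+1) + i + F (2*K)) + F (2*K+1) from by ring,
      WI hs K _ (by omega) (by omega),
      show g (K+1) + β + i + F (2*K) = (g (K+1) + i + F (2*K)) + β from by ring,
      peel M₀ _ (by omega)]
  -- switch to determinant land
  have hfm : f (2*(K+1)+3) = F (2*K+5) := by
    rw [hfF, show 2*(K+1)+3 = 2*K+5 from by ring]
  have hfn : f (2*(K+1)) = F (2*K+2) := by
    rw [hfF, show 2*(K+1) = 2*K+2 from by ring]
  have hm1 : α + 1 - f (2*(K+1)+3) = g (K+1) + β + 1 := by rw [hfm]; omega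
  have hm2 : α + 2 - f (2*(K+1)+3) = g (K+1) + β + 2 := by rw [hfm]; omega
  rw [hm1, hm2, hfn]
  set N := F (2*K+2) - 1 with hN
  have hNpos : 2 ≤ N := by omega
  have hFN : F (2*K+2) = N + 1 := by omega
  set m := g (K+1) + β + 1 with hm
  have hmm : g (K+1) + β + 2 = m + 1 := by omega
  rw [hmm, hFN]
  -- the matrix
  set A : Matrix (Fin (N+1)) (Fin (N+1)) ℤ :=
    Matrix.of (fun i j : Fin (N+1) => (s (m + i.1 + j.1) : ℤ)) with hA
  have hHA : H s m (N+1) = A.det := rfl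
  set ε : ℤ := (-1)^(K+1) with hε
  have hKpar : ((K+1) % 2 = 1 ∧ ε = -1) ∨ ((K+1) % 2 = 0 ∧ ε = 1) := by
    rcases Nat.lt_or_ge ((K+1) % 2) 1 with h|h
    · right
      refine ⟨by omega, ?_⟩
      rw [hε]; exact Even.neg_one_pow ⟨(K+1)/2, by omega⟩
    · left
      refine ⟨by omega, ?_⟩
      rw [hε]; exact Odd.neg_one_pow ⟨K/2, by omega⟩
  have hj0lt : F (2*K) - 1 < N + 1 := by omega
  set j₀ : Fin (N+1) := ⟨F (2*K) - 1, hj0lt⟩ with hj₀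
  have hj0ne : j₀ ≠ Fin.last N := by
    intro hcon
    have h := congrArg Fin.val hcon
    simp only [hj₀, Fin.val_last] at h
    omega
  have hlastne : Fin.last N ≠ 0 := by
    intro h
    have h2 := congrArg Fin.val h
    simp only [Fin.val_last, Fin.val_zero] at h2
    omega
  set v : Fin (N+1) → ℤ :=
    (fun i => if i = 0 then ε else if i = Fin.last N then -ε else 0) with hv
  have hAij : ∀ (i j : Fin (N+1)), A i j = (s (m + i.1 + j.1) : ℤ) := fun i j => rfl
  have colrel : ∀ i : Fin (N+1), A i (Fin.last N) = A i j₀ + v i := by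
    intro i
    rw [hAij, hAij]
    by_cases hi0 : i = 0
    · subst hi0
      have hvv : v 0 = ε := by simp [hv]
      rw [hvv]
      rw [show m + ((0:Fin (N+1)):ℕ) + ((Fin.last N):ℕ) = g (K+1) + β + F (2*K+2) from by
        simp only [Fin.val_zero, Fin.val_last]; omega]
      rw [show m + ((0:Fin (N+1)):ℕ) + (j₀:ℕ) = g (K+1) + β + F (2*K) from by
        simp only [Fin.val_zero, hj₀]; omega]
      rw [hRB, hRA]
      rcases hKpar with ⟨hp, he⟩|⟨hp, he⟩ <;> rw [hp, he] <;> norm_num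
    · by_cases hiN : i = Fin.last N
      · subst hiN
        have hvv : v (Fin.last N) = -ε := by simp [hv, hlastne]
        rw [hvv]
        rw [show m + ((Fin.last N):ℕ) + ((Fin.last N):ℕ) = g (K+1) + β + 2*F (2*K+2) - 1 from by
          simp only [Fin.val_last]; omega]
        rw [show m + ((Fin.last N):ℕ) + (j₀:ℕ) = g (K+1) + β + F (2*K+2) + F (2*K) - 1 from by
          simp only [Fin.val_last, hj₀]; omega]
        rw [hRD, hRC]
        rcases hKpar with ⟨hp, he⟩|⟨hp, he⟩ <;> rw [hp, he] <;> norm_num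
      · have hvv : v i = 0 := by simp [hv, hi0, hiN]
        rw [hvv, add_zero]
        have hival1 : 1 ≤ (i:ℕ) := by
          rcases Nat.eq_zero_or_pos (i:ℕ) with h|h
          · exact absurd (Fin.ext (by simp [h]) : i = 0) hi0
          · omega
        have hival2 : (i:ℕ) < N := by
          rcases Nat.lt_or_ge (i:ℕ) N with h|h
          · exact h
          · have : (i:ℕ) = N := by have := i.isLt; omega
            exact absurd (Fin.ext (by simp [this, Fin.val_last]) : i = Fin.last N) hiN
        rw [show m + (i:ℕ) + ((Fin.last N):ℕ) = g (K+1) + β + (i:ℕ) + F (2*K) + F (2*K+1) from by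
          simp only [Fin.val_last]; omega]
        rw [show m + (i:ℕ) + (j₀:ℕ) = g (K+1) + β + (i:ℕ) + F (2*K) from by
          simp only [hj₀]; omega]
        rw [hRI (i:ℕ) hival1 (by omega)]
  -- determinant manipulation
  rw [hHA]
  have step1 : A.det = (A.updateCol (Fin.last N) ((fun i => A i j₀) + v)).det := by
    have hcols : ((fun i => A i j₀) + v) = fun i => A i (Fin.last N) := by
      funext i
      exact (colrel i).symm
    rw [hcols, Matrix.updateCol_eq_self]
  rw [step1, Matrix.det_updateCol_add]
  have step2 : (A.updateCol (Fin.last N) (fun i => A i j₀)).det = 0 := by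
    apply Matrix.det_zero_of_column_eq hj0ne
    intro r
    rw [Matrix.updateCol_ne hj0ne, Matrix.updateCol_self]
  rw [step2, zero_add]
  rw [Matrix.det_succ_column _ (Fin.last N)]
  rw [Finset.sum_eq_add_of_mem 0 (Fin.last N) (Finset.mem_univ _) (Finset.mem_univ _)
    (Ne.symm hlastne) (by
      intro c _ hc
      rw [Matrix.updateCol_self]
      have : v c = 0 := by simp [hv, hc.1, hc.2]
      rw [this, mul_zero, zero_mul])]
  have hNeven : N % 2 = 0 := by
    have h := F_odd_even (K+1)
    rw [show 2*(K+1) = 2*K+2 from by ring] at h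
    omega
  have sub0 : ((A.updateCol (Fin.last N) v).submatrix (Fin.succAbove 0) (Fin.last N).succAbove)
      = Matrix.of (fun i j : Fin N => (s (m + 1 + i.1 + j.1) : ℤ)) := by
    ext i j
    rw [Matrix.submatrix_apply, Fin.succAbove_last,
      Matrix.updateCol_ne (Fin.castSucc_lt_last j).ne, Fin.succAbove_zero]
    rw [hAij]
    simp only [Matrix.of_apply, Fin.val_succ, Fin.coe_castSucc]
    congr 2
    omega
  have sublast : ((A.updateCol (Fin.last N) v).submatrix
      (Fin.succAbove (Fin.last N)) (Fin.last N).succAbove)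
      = Matrix.of (fun i j : Fin N => (s (m + i.1 + j.1) : ℤ)) := by
    ext i j
    rw [Matrix.submatrix_apply, Fin.succAbove_last,
      Matrix.updateCol_ne (Fin.castSucc_lt_last j).ne]
    rw [hAij]
    simp only [Matrix.of_apply, Fin.coe_castSucc]
  have hv0 : (A.updateCol (Fin.last N) v) 0 (Fin.last N) = ε := by
    rw [Matrix.updateCol_self]; simp [hv]
  have hvlast : (A.updateCol (Fin.last N) v) (Fin.last N) (Fin.last N) = -ε := by
    rw [Matrix.updateCol_self]; simp [hv, hlastne]
  rw [hv0, hvlast, sub0, sublast]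
  have hsign0 : ((-1:ℤ))^(((0 : Fin (N+1)):ℕ) + ((Fin.last N):ℕ)) = 1 := by
    simp only [Fin.val_zero, Fin.val_last, zero_add]
    exact Even.neg_one_pow ⟨N/2, by omega⟩
  have hsignN : ((-1:ℤ))^(((Fin.last N):ℕ) + ((Fin.last N):ℕ)) = 1 := by
    simp only [Fin.val_last]
    exact Even.neg_one_pow ⟨N, by omega⟩
  rw [hsign0, hsignN]
  have hH1 : H s (m+1) N = (Matrix.of (fun i j : Fin N => (s (m + 1 + i.1 + j.1) : ℤ))).det := rfl
  have hH2 : H s m N = (Matrix.of (fun i j : Fin N => (s (m + i.1 + j.1) : ℤ))).det := rfl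
  rw [← hH1, ← hH2]
  ring
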